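/- Let Γ be a group acting by homeomorphisms on a Polish space X such that some orbit is dense, and let R ⊆ X² be the orbit equivalence relation. If R is meager in X², then R is not smooth. -/

import Mathlib

open Filter Topology Set

/-- Two open sets that agree mod meager have the same closure. -/
lemma closure_eq_of_open_residualEq {X : Type*} [TopologicalSpace X] [BaireSpace X]
    {U V : Set X} (hU : IsOpen U) (hV : IsOpen V) (h : U =ᵇ V) :
    closure U = closure V := by
  have key : ∀ {A B : Set X}, IsOpen A → A =ᵇ B → A ⊆ closure B := by
    intro A B hA hAB x hx
    by_contra hxc
    have hW : IsOpen (A ∩ (closure B)ᶜ) := hA.inter isClosed_closure.isOpen_compl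
    have hWne : (A ∩ (closure B)ᶜ).Nonempty := ⟨x, hx, hxc⟩
    have hE : {y | y ∈ A ↔ y ∈ B} ∈ residual X := by
      filter_upwards [hAB] with y hy
      exact iff_of_eq hy
    obtain ⟨z, hzE, hzA, hzB⟩ := (dense_of_mem_residual hE).exists_mem_open hW hWne
    exact hzB (subset_closure (hzE.mp hzA))
  refine subset_antisymm (closure_minimal (key hU h) isClosed_closure)
    (closure_minimal (key hV h.symm) isClosed_closure)


lemma polishBaire (X : Type*) [TopologicalSpace X] [PolishSpace X] : BaireSpace X := by
  letI := TopologicalSpace.upgradeIsCompletelyMetrizable X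
  infer_instance

/-- Topological 0-1 law: an invariant Baire measurable set for an action with a
dense orbit is meager or comeager. -/
lemma zero_one_law {X : Type*} [TopologicalSpace X] [PolishSpace X]
    {Γ : Type*} [Group Γ] [MulAction Γ X] [ContinuousConstSMul Γ X]
    {x₀ : X} (hx₀ : Dense (MulAction.orbit Γ x₀ : Set X))
    {A : Set X} (hA : BaireMeasurableSet A)
    (hinv : ∀ (γ : Γ) (x : X), γ • x ∈ A ↔ x ∈ A) :
    A ∈ residual X ∨ IsMeagre A := by
  haveI : BaireSpace X := polishBaire X
  obtain ⟨U, Uo, hAU⟩ := hA.residualEq_isOpen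
  by_cases hUne : U.Nonempty
  · left
    -- A is residually equal to each translate preimage of U
    have hpre : ∀ γ : Γ, A =ᵇ ((fun x : X => γ • x) ⁻¹' U) := by
      intro γ
      have ht : Tendsto (fun x : X => γ • x) (residual X) (residual X) :=
        tendsto_residual_of_isOpenMap (Homeomorph.smul γ).continuous
          (Homeomorph.smul γ).isOpenMap
      have h1 : ((fun x : X => γ • x) ⁻¹' A) =ᵇ ((fun x : X => γ • x) ⁻¹' U) :=
        hAU.comp_tendsto ht
      have h2 : (fun x : X => γ • x) ⁻¹' A = A := by
        ext x; exact hinv γ x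
      rwa [h2] at h1
    have hVo : ∀ γ : Γ, IsOpen ((fun x : X => γ • x) ⁻¹' U) := fun γ =>
      Uo.preimage (continuous_const_smul γ)
    have hcl : ∀ γ : Γ, closure ((fun x : X => γ • x) ⁻¹' U) = closure U := fun γ =>
      closure_eq_of_open_residualEq (hVo γ) Uo ((hpre γ).symm.trans hAU)
    -- x₀ is in the closure of U
    obtain ⟨y, hyOrb, hyU⟩ := hx₀.exists_mem_open Uo hUne
    obtain ⟨γ₀, rfl⟩ := hyOrb
    have hx₀cl : x₀ ∈ closure U := by
      rw [← hcl γ₀]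
      exact subset_closure hyU
    -- U is dense
    have hUdense : Dense U := by
      rw [dense_iff_closure_eq, ← univ_subset_iff, ← hx₀.closure_eq]
      refine closure_minimal ?_ isClosed_closure
      rintro _ ⟨γ, rfl⟩
      have hpc : (fun x : X => γ • x) ⁻¹' (closure U) = closure ((fun x : X => γ • x) ⁻¹' U) :=
        (Homeomorph.smul γ).preimage_closure U
      have : x₀ ∈ (fun x : X => γ • x) ⁻¹' (closure U) := by
        rw [hpc, hcl γ]; exact hx₀cl
      exact this
    have hUres : U ∈ residual X := residual_of_dense_open Uo hUdense
    filter_upwards [hAU, hUres] with x hx hxU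
    exact (iff_of_eq hx).mpr hxU
  · right
    rw [not_nonempty_iff_eq_empty] at hUne
    subst hUne
    rw [IsMeagre]
    filter_upwards [hAU] with x hx hxA
    exact (iff_of_eq hx).mp hxA

/-- Becker–Kechris (with Harrington–Kechris–Louveau): if a group `Γ` acts by
homeomorphisms on a Polish space `X` with a dense orbit, and the orbit equivalence
relation `R` is meager in `X²`, then `R` is not smooth. -/
theorem orbit_equivalence_meager_not_smooth
    {X : Type*} [TopologicalSpace X] [PolishSpace X] [MeasurableSpace X] [BorelSpace X]
    {Γ : Type*} [Group Γ] [MulAction Γ X]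
    (hcont : ∀ γ : Γ, Continuous fun x : X => γ • x)
    (hdense : ∃ x : X, Dense (MulAction.orbit Γ x : Set X))
    (hmeager : IsMeagre {p : X × X | p.2 ∈ MulAction.orbit Γ p.1}) :
    ¬ ∃ (Z : Type) (tZ : TopologicalSpace Z), @PolishSpace Z tZ ∧
      ∃ f : X → Z, @Measurable X Z _ (@borel Z tZ) f ∧
        ∀ x y : X, f x = f y ↔ y ∈ MulAction.orbit Γ x := by
  haveI : ContinuousConstSMul Γ X := ⟨hcont⟩
  haveI : BaireSpace (X × X) := polishBaire _
  obtain ⟨x₀, hx₀⟩ := hdense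
  rintro ⟨Z, tZ, hPZ, f, hf, hforb⟩
  letI := tZ
  haveI := hPZ
  letI : MeasurableSpace Z := borel Z
  haveI : BorelSpace Z := ⟨rfl⟩
  -- f is invariant under the action
  have hfinv : ∀ (γ : Γ) (x : X), f (γ • x) = f x :=
    fun γ x => ((hforb x (γ • x)).mpr ⟨γ, rfl⟩).symm
  -- countable basis of Z
  set B : Set (Set Z) := TopologicalSpace.countableBasis Z with hB
  -- the good residual set for each basis element
  classical
  let g : Set Z → Set X := fun U =>
    if f ⁻¹' U ∈ residual X then f ⁻¹' U else (f ⁻¹' U)ᶜ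
  have hg : ∀ U ∈ B, g U ∈ residual X := by
    intro U hU
    have hUo : IsOpen U := TopologicalSpace.isOpen_of_mem_countableBasis hU
    have hAbm : BaireMeasurableSet (f ⁻¹' U) :=
      (hf hUo.measurableSet).baireMeasurableSet
    have hAinv : ∀ (γ : Γ) (x : X), γ • x ∈ f ⁻¹' U ↔ x ∈ f ⁻¹' U := by
      intro γ x
      simp [Set.mem_preimage, hfinv γ x]
    rcases zero_one_law hx₀ hAbm hAinv with h | h
    · simp only [g, if_pos h]; exact h
    · have hnr : f ⁻¹' U ∉ residual X ∨ f ⁻¹' U ∈ residual X := by tauto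
      by_cases hr : f ⁻¹' U ∈ residual X
      · simp only [g, if_pos hr]; exact hr
      · simp only [g, if_neg hr]; exact h
  -- the residual set C where f is constant
  set C : Set X := ⋂ U ∈ B, g U with hC
  have hCres : C ∈ residual X :=
    (countable_bInter_mem (TopologicalSpace.countable_countableBasis Z)).mpr hg
  -- f is constant on C
  have hconst : ∀ x ∈ C, ∀ y ∈ C, f x = f y := by
    intro x hx y hy
    by_contra hne
    have hV : IsOpen ({f y}ᶜ : Set Z) := isClosed_singleton.isOpen_compl
    obtain ⟨U, hUB, hfxU, hUV⟩ :=
      (TopologicalSpace.isBasis_countableBasis Z).exists_subset_of_mem_open hne hV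
    have hxg : x ∈ g U := mem_iInter₂.mp hx U hUB
    have hyg : y ∈ g U := mem_iInter₂.mp hy U hUB
    by_cases hr : f ⁻¹' U ∈ residual X
    · have : y ∈ f ⁻¹' U := by simpa only [g, if_pos hr] using hyg
      exact hUV this rfl
    · have : x ∉ f ⁻¹' U := by simpa only [g, if_neg hr, Set.mem_compl_iff] using hxg
      exact this hfxU
  -- C × C is contained in the orbit equivalence relation
  have hsub : C ×ˢ C ⊆ {p : X × X | p.2 ∈ MulAction.orbit Γ p.1} := by
    rintro ⟨x, y⟩ ⟨hx, hy⟩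
    exact (hforb x y).mp (hconst x hx y hy)
  -- C × C is residual in X × X
  have hCCres : C ×ˢ C ∈ residual (X × X) := by
    have h1 : (Prod.fst ⁻¹' C : Set (X × X)) ∈ residual (X × X) :=
      tendsto_residual_of_isOpenMap continuous_fst isOpenMap_fst hCres
    have h2 : (Prod.snd ⁻¹' C : Set (X × X)) ∈ residual (X × X) :=
      tendsto_residual_of_isOpenMap continuous_snd isOpenMap_snd hCres
    have : C ×ˢ C = Prod.fst ⁻¹' C ∩ Prod.snd ⁻¹' C := by
      ext ⟨x, y⟩; simp [Set.mem_prod]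
    rw [this]
    exact inter_mem h1 h2
  -- contradiction: C × C is both meager and residual
  have hCCmeager : IsMeagre (C ×ˢ C) := hmeager.mono hsub
  have hfin : (C ×ˢ C)ᶜ ∩ (C ×ˢ C) ∈ residual (X × X) := inter_mem hCCmeager hCCres
  haveI : Nonempty (X × X) := ⟨(x₀, x₀)⟩
  obtain ⟨p, hp1, hp2⟩ := (dense_of_mem_residual hfin).nonempty
  exact hp1 hp2
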